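/- Let ℱ be a field with |ℱ| ≥ k. If α is an element of PGL(2, ℱ), then there is a unique projectivity α̃ in PGL(k, ℱ) such that ν(x^α) = ν(x)^{α̃} for all points x of PG(1, ℱ), where ν : PG(1, ℱ) → PG(k-1, ℱ) is the Veronese-type map (x₁, x₂) ↦ (x₁^{k-1}, x₁^{k-2}x₂, ..., x₂^{k-1}). -/

import Mathlib

/-- The Veronese-type map `(x₁, x₂) ↦ (x₁^{k-1}, x₁^{k-2}x₂, …, x₂^{k-1})` on
coordinate vectors. -/
def veroneseMap (F : Type*) [Field F] (k : ℕ) (v : Fin 2 → F) : Fin k → F :=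
  fun i => v 0 ^ (k - 1 - (i : ℕ)) * v 1 ^ (i : ℕ)

section Aux

variable {F : Type*} [Field F] {k : ℕ}

private lemma fin2_decomp (v : Fin 2 → F) : v = v 0 • ![1, 0] + v 1 • ![0, 1] := by
  funext i; fin_cases i <;> simp

/-- The lift of a linear map of `F²` to the degree-`k-1` symmetric power,
written out in coordinates. -/
noncomputable def vlift (k : ℕ) (A : (Fin 2 → F) →ₗ[F] (Fin 2 → F)) :
    (Fin k → F) →ₗ[F] (Fin k → F) :=
  LinearMap.pi fun i =>
    ∑ p ∈ Finset.range (k - (i : ℕ)), ∑ q ∈ Finset.range ((i : ℕ) + 1),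
      ((Nat.choose (k - 1 - (i : ℕ)) p : F) * (Nat.choose (i : ℕ) q : F) *
        A ![1, 0] 0 ^ p * A ![0, 1] 0 ^ (k - 1 - (i : ℕ) - p) *
        A ![1, 0] 1 ^ q * A ![0, 1] 1 ^ ((i : ℕ) - q)) •
      LinearMap.proj (⟨k - 1 - (p + q), by have := i.isLt; omega⟩ : Fin k)

lemma vlift_veronese (A : (Fin 2 → F) →ₗ[F] (Fin 2 → F)) (v : Fin 2 → F) :
    vlift k A (veroneseMap F k v) = veroneseMap F k (A v) := by
  funext i
  have hi := i.isLt
  have hAv : A v = v 0 • A ![1, 0] + v 1 • A ![0, 1] := by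
    conv_lhs => rw [fin2_decomp v]
    rw [map_add, map_smul, map_smul]
  have hA0 : A v 0 = v 0 * A ![1, 0] 0 + v 1 * A ![0, 1] 0 := by
    rw [hAv]; simp
  have hA1 : A v 1 = v 0 * A ![1, 0] 1 + v 1 * A ![0, 1] 1 := by
    rw [hAv]; simp
  show _ = veroneseMap F k (A v) i
  rw [veroneseMap]
  rw [hA0, hA1, add_pow, add_pow]
  rw [Finset.sum_mul_sum]
  have hr : k - 1 - (i : ℕ) + 1 = k - (i : ℕ) := by omega
  rw [hr]
  simp only [vlift, LinearMap.pi_apply, LinearMap.sum_apply, LinearMap.smul_apply,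
    LinearMap.proj_apply, smul_eq_mul]
  refine Finset.sum_congr rfl fun p hp => Finset.sum_congr rfl fun q hq => ?_
  rw [Finset.mem_range] at hp hq
  show _ * veroneseMap F k v _ = _
  rw [veroneseMap]
  show _ * (v 0 ^ (k - 1 - (k - 1 - (p + q))) * v 1 ^ (k - 1 - (p + q))) = _
  have e1 : k - 1 - (k - 1 - (p + q)) = p + q := by omega
  have e2 : k - 1 - (p + q) = (k - 1 - (i : ℕ) - p) + ((i : ℕ) - q) := by omega
  rw [e1, e2, pow_add, pow_add]
  ring

lemma veronese_row (t : Fin k ↪ F) (s : Fin k) :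
    veroneseMap F k ![1, t s] = Matrix.vandermonde (⇑t) s := by
  funext i; simp [veroneseMap, Matrix.vandermonde]

lemma veronese_rows_li (t : Fin k ↪ F) :
    LinearIndependent F (fun s => veroneseMap F k ![1, t s]) := by
  have h : (fun s => veroneseMap F k ![1, t s]) = fun s => Matrix.vandermonde (⇑t) s :=
    funext (veronese_row t)
  rw [h]
  exact Matrix.linearIndependent_rows_iff_isUnit.2 ((Matrix.isUnit_iff_isUnit_det _).2
    (isUnit_iff_ne_zero.2 (Matrix.det_vandermonde_ne_zero_iff.2 t.injective)))

end Aux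

/-- For `|F| ≥ k`, every projectivity `α` of `PG(1, F)` lifts to a unique
projectivity `α̃` of `PG(k-1, F)` with `ν(x^α) = ν(x)^{α̃}`.  Projectivities are
represented by invertible linear maps, and equality of the induced projectivities
amounts to equality up to a nonzero scalar. -/
theorem veronese_lift_exists_unique {F : Type*} [Field F] [Fintype F] (k : ℕ) (hk : 2 ≤ k)
    (hcard : k ≤ Fintype.card F)
    (α : (Fin 2 → F) ≃ₗ[F] (Fin 2 → F)) :
    (∃ β : (Fin k → F) ≃ₗ[F] (Fin k → F),
      ∀ v : Fin 2 → F, v ≠ 0 →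
        ∃ c : F, c ≠ 0 ∧ β (veroneseMap F k v) = c • veroneseMap F k (α v)) ∧
    (∀ β β' : (Fin k → F) ≃ₗ[F] (Fin k → F),
      (∀ v : Fin 2 → F, v ≠ 0 →
        ∃ c : F, c ≠ 0 ∧ β (veroneseMap F k v) = c • veroneseMap F k (α v)) →
      (∀ v : Fin 2 → F, v ≠ 0 →
        ∃ c : F, c ≠ 0 ∧ β' (veroneseMap F k v) = c • veroneseMap F k (α v)) →
      ∃ c : F, c ≠ 0 ∧ ∀ w, β' w = c • β w) := by
  haveI : Nonempty (Fin k) := ⟨⟨0, by omega⟩⟩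
  obtain ⟨t⟩ : Nonempty (Fin k ↪ F) :=
    Function.Embedding.nonempty_of_card_le (by simpa using hcard)
  set b : Fin k → (Fin k → F) := fun s => veroneseMap F k ![1, t s] with hb
  have li := veronese_rows_li (F := F) t
  let B : Module.Basis (Fin k) F (Fin k → F) :=
    basisOfLinearIndependentOfCardEqFinrank li
      (by simp [Module.finrank_fintype_fun_eq_card])
  have hB : ∀ s, B s = b s := fun s => by
    rw [hb]
    exact congrFun (coe_basisOfLinearIndependentOfCardEqFinrank li _) s
  constructor
  · -- existence
    refine ⟨LinearEquiv.ofLinear (vlift k α.toLinearMap) (vlift k α.symm.toLinearMap) ?_ ?_,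
      fun v _ => ⟨1, one_ne_zero, ?_⟩⟩
    · apply B.ext; intro s
      rw [hB s]
      show (vlift k α.toLinearMap) ((vlift k α.symm.toLinearMap)
        (veroneseMap F k ![1, t s])) = LinearMap.id (veroneseMap F k ![1, t s])
      rw [vlift_veronese, vlift_veronese]
      simp
    · apply B.ext; intro s
      rw [hB s]
      show (vlift k α.symm.toLinearMap) ((vlift k α.toLinearMap)
        (veroneseMap F k ![1, t s])) = LinearMap.id (veroneseMap F k ![1, t s])
      rw [vlift_veronese, vlift_veronese]
      simp
    · rw [one_smul, LinearEquiv.ofLinear_apply, vlift_veronese]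
      rfl
  · -- uniqueness
    intro β β' h1 h2
    set γ : (Fin k → F) →ₗ[F] (Fin k → F) := (β.symm.trans β').toLinearMap with hγdef
    have hγ : ∀ w : Fin 2 → F, w ≠ 0 →
        ∃ d : F, d ≠ 0 ∧ γ (veroneseMap F k w) = d • veroneseMap F k w := by
      intro w hw
      have hv : α.symm w ≠ 0 := fun h => hw (by rw [← α.apply_symm_apply w, h, map_zero])
      obtain ⟨c, hc, hbc⟩ := h1 _ hv
      obtain ⟨c', hc', hbc'⟩ := h2 _ hv
      rw [α.apply_symm_apply] at hbc hbc'
      have hsymm : β.symm (veroneseMap F k w) = c⁻¹ • veroneseMap F k (α.symm w) := by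
        apply β.injective
        rw [LinearEquiv.apply_symm_apply, map_smul, hbc, smul_smul,
          inv_mul_cancel₀ hc, one_smul]
      refine ⟨c⁻¹ * c', mul_ne_zero (inv_ne_zero hc) hc', ?_⟩
      show β' (β.symm (veroneseMap F k w)) = _
      rw [hsymm, map_smul, hbc', smul_smul]
    have hbs : ∀ s, ∃ d : F, d ≠ 0 ∧ γ (b s) = d • b s := by
      intro s
      refine hγ ![1, t s] fun h => ?_
      have := congrFun h 0; simp at this
    choose d hd0 hd using hbs
    set pvec : Fin k → F := veroneseMap F k ![0, 1] with hpvec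
    obtain ⟨e, he0, he⟩ : ∃ e : F, e ≠ 0 ∧ γ pvec = e • pvec := by
      refine hγ ![0, 1] fun h => ?_
      have := congrFun h 1; simp at this
    have hrepr : ∑ s, B.repr pvec s • b s = pvec := by
      conv_rhs => rw [← B.sum_repr pvec]
      exact Finset.sum_congr rfl fun s _ => by rw [hB]
    have hds : ∀ s, d s = e := by
      intro s
      set f : Polynomial F := ∏ r ∈ Finset.univ.erase s, (Polynomial.X - Polynomial.C (t r))
        with hf
      have hmonic : f.Monic :=
        Polynomial.monic_prod_of_monic _ _ fun r _ => Polynomial.monic_X_sub_C _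
      have hdeg : f.natDegree = k - 1 := by
        rw [hf, Polynomial.natDegree_prod _ _ fun r _ => Polynomial.X_sub_C_ne_zero _]
        simp [Polynomial.natDegree_X_sub_C, Finset.card_erase_of_mem]
      set φ : (Fin k → F) →ₗ[F] F :=
        ∑ i : Fin k, f.coeff (i : ℕ) • (LinearMap.proj i : (Fin k → F) →ₗ[F] F) with hφdef
      have hφ : ∀ w : Fin k → F, φ w = ∑ i : Fin k, f.coeff (i : ℕ) * w i := by
        intro w
        simp [hφdef]
      have hφb : ∀ r, φ (b r) = Polynomial.eval (t r) f := by
        intro r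
        rw [hφ, Polynomial.eval_eq_sum_range' (n := k) (by omega), ← Fin.sum_univ_eq_sum_range]
        refine Finset.sum_congr rfl fun i _ => ?_
        rw [hb]
        show f.coeff (i : ℕ) * veroneseMap F k ![1, t r] i = _
        simp [veroneseMap]
      have heval0 : ∀ r, r ≠ s → Polynomial.eval (t r) f = 0 := by
        intro r hr
        rw [hf, Polynomial.eval_prod]
        exact Finset.prod_eq_zero (Finset.mem_erase.2 ⟨hr, Finset.mem_univ r⟩) (by simp)
      have hφp : φ pvec = 1 := by
        rw [hφ]
        have hcoeff : f.coeff (k - 1) = 1 := by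
          have h0 := hmonic.coeff_natDegree
          rwa [hdeg] at h0
        rw [Finset.sum_eq_single (⟨k - 1, by omega⟩ : Fin k)]
        · show f.coeff (k - 1) * veroneseMap F k ![0, 1] ⟨k - 1, by omega⟩ = 1
          simp [veroneseMap, hcoeff]
        · intro r _ hr
          show f.coeff (r : ℕ) * veroneseMap F k ![0, 1] r = 0
          have hrk : (r : ℕ) ≠ k - 1 := fun h0 => hr (by ext; simp [h0])
          have hne : k - 1 - (r : ℕ) ≠ 0 := by have := r.isLt; omega
          simp [veroneseMap, zero_pow hne]
        · intro h; exact absurd (Finset.mem_univ _) h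
      have key1 : B.repr pvec s * Polynomial.eval (t s) f = 1 := by
        have h0 := congrArg φ hrepr
        rw [map_sum] at h0
        simp_rw [map_smul, smul_eq_mul] at h0
        rw [hφp] at h0
        rw [Finset.sum_eq_single s] at h0
        · rw [hφb] at h0; exact h0
        · intro r _ hr; rw [hφb, heval0 r hr, mul_zero]
        · intro h; exact absurd (Finset.mem_univ _) h
      have key2 : d s * (B.repr pvec s * Polynomial.eval (t s) f) = e := by
        have h0 : φ (γ pvec) = e := by
          rw [he, map_smul, hφp, smul_eq_mul, mul_one]
        have h1' : γ pvec = ∑ r, B.repr pvec r • (d r • b r) := by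
          conv_lhs => rw [← hrepr]
          rw [map_sum]
          exact Finset.sum_congr rfl fun r _ => by rw [map_smul, hd]
        rw [h1', map_sum] at h0
        simp_rw [map_smul, smul_eq_mul] at h0
        rw [Finset.sum_eq_single s] at h0
        · rw [hφb] at h0
          rw [← h0]; ring
        · intro r _ hr; rw [hφb, heval0 r hr, mul_zero, mul_zero]
        · intro h; exact absurd (Finset.mem_univ _) h
      linear_combination key2 - d s * key1
    have hall : ∀ w, γ w = e • w := by
      have heq : γ = e • (LinearMap.id : (Fin k → F) →ₗ[F] (Fin k → F)) := by
        apply B.ext; intro s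
        rw [hB, hd, hds]
        simp
      intro w; rw [heq]; simp
    refine ⟨e, he0, fun w => ?_⟩
    have h0 := hall (β w)
    simp only [hγdef, LinearEquiv.coe_coe, LinearEquiv.trans_apply,
      LinearEquiv.symm_apply_apply] at h0
    exact h0
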